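/- The Burau matrix of the positive lift of u = s1*s2*s1*s3 in B4: over Z[v,v^{-1}], the product B1*B2*B1*B3 equals the matrix [[0,0,-v^4],[v^3,v^2,v^3],[0,-v,-v^2]]. In particular its projlen equals 3, which is odd, showing that the identity projlen(pi_4(sigma)) = 2*(Garside length of sigma) valid for B3 fails for B4. -/

import Mathlib

open LaurentPolynomial

/-- The three reduced Burau matrices `B1, B2, B3` for the 4-strand braid group,
over the Laurent polynomial ring `ℤ[v,v⁻¹]` (here `v = T 1`). -/
noncomputable def BurauB : Fin 3 → Matrix (Fin 3) (Fin 3) (LaurentPolynomial ℤ)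
  | 0 => !![-(T 1)^2, -(T 1), 0; 0, 1, 0; 0, 0, 1]
  | 1 => !![1, 0, 0; -(T 1), -(T 1)^2, -(T 1); 0, 0, 1]
  | 2 => !![1, 0, 0; 0, 1, 0; 0, -(T 1), -(T 1)^2]

/-- The set of exponents of `v` occurring (with nonzero coefficient) in an entry
of a 3×3 matrix of Laurent polynomials. -/
def matExps (A : Matrix (Fin 3) (Fin 3) (LaurentPolynomial ℤ)) : Set ℤ :=
  {k | ∃ i j, (show ℤ →₀ ℤ from (A i j).coeff) k ≠ 0}

/-- `deg` of a matrix: the highest power of `v` occurring in an entry. -/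
noncomputable def matDeg (A : Matrix (Fin 3) (Fin 3) (LaurentPolynomial ℤ)) : ℤ := sSup (matExps A)

/-- `val` of a matrix: the lowest power of `v` occurring in an entry. -/
noncomputable def matVal (A : Matrix (Fin 3) (Fin 3) (LaurentPolynomial ℤ)) : ℤ := sInf (matExps A)

/-- `projlen` of a matrix: `deg` minus `val`. -/
noncomputable def projlen (A : Matrix (Fin 3) (Fin 3) (LaurentPolynomial ℤ)) : ℤ := matDeg A - matVal A

lemma burau_gen {R : Type*} [CommRing R] (t : R) :
    (!![-t^2, -t, 0; 0, 1, 0; 0, 0, 1] : Matrix (Fin 3) (Fin 3) R) *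
      !![1, 0, 0; -t, -t^2, -t; 0, 0, 1] * !![-t^2, -t, 0; 0, 1, 0; 0, 0, 1] *
      !![1, 0, 0; 0, 1, 0; 0, -t, -t^2] =
      !![0, 0, -t^4; t^3, t^2, t^3; 0, -t, -t^2] := by
  ext i j
  fin_cases i <;> fin_cases j <;>
    simp [Matrix.mul_apply, Fin.sum_univ_three, Matrix.vecHead, Matrix.vecTail] <;> ring

lemma Tcoeff (n k : ℤ) :
    (show ℤ →₀ ℤ from (T n : LaurentPolynomial ℤ).coeff) k = if k = n then 1 else 0 := by
  show (T n : LaurentPolynomial ℤ).coeff k = _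
  rw [T_apply]; exact if_congr eq_comm rfl rfl

lemma negcoeff (p : LaurentPolynomial ℤ) (k : ℤ) :
    (show ℤ →₀ ℤ from (-p : LaurentPolynomial ℤ).coeff) k = -((show ℤ →₀ ℤ from p.coeff) k) := rfl

lemma zerocoeff (k : ℤ) : (show ℤ →₀ ℤ from (0 : LaurentPolynomial ℤ).coeff) k = 0 := rfl

private noncomputable abbrev M : Matrix (Fin 3) (Fin 3) (LaurentPolynomial ℤ) :=
  !![0, 0, -(T 4); T 3, T 2, T 3; 0, -(T 1), -(T 2)]

lemma exps_eq : matExps M = {1, 2, 3, 4} := by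
  ext k
  simp only [matExps, Set.mem_setOf_eq, Set.mem_insert_iff, Set.mem_singleton_iff]
  constructor
  · rintro ⟨i, j, h⟩
    fin_cases i <;> fin_cases j <;>
      simp only [show ((⟨0, by norm_num⟩ : Fin 3)) = 0 from rfl,
        show ((⟨1, by norm_num⟩ : Fin 3)) = 1 from rfl,
        show ((⟨2, by norm_num⟩ : Fin 3)) = 2 from rfl] at h
    · rw [show M 0 0 = 0 by norm_num] at h; exact absurd (zerocoeff k) h
    · rw [show M 0 1 = 0 by norm_num] at h; exact absurd (zerocoeff k) h
    · rw [show M 0 2 = -(T 4) by rfl, negcoeff, Tcoeff] at h; split at h <;> omega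
    · rw [show M 1 0 = T 3 by norm_num, Tcoeff] at h; split at h <;> omega
    · rw [show M 1 1 = T 2 by norm_num, Tcoeff] at h; split at h <;> omega
    · rw [show M 1 2 = T 3 by rfl, Tcoeff] at h; split at h <;> omega
    · rw [show M 2 0 = 0 by rfl] at h; exact absurd (zerocoeff k) h
    · rw [show M 2 1 = -(T 1) by rfl, negcoeff, Tcoeff] at h; split at h <;> omega
    · rw [show M 2 2 = -(T 2) by rfl, negcoeff, Tcoeff] at h; split at h <;> omega
  · rintro (rfl | rfl | rfl | rfl)
    · exact ⟨2, 1, by rw [show M 2 1 = -(T 1) by rfl, negcoeff, Tcoeff]; norm_num⟩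
    · exact ⟨1, 1, by rw [show M 1 1 = T 2 by norm_num, Tcoeff]; norm_num⟩
    · exact ⟨1, 0, by rw [show M 1 0 = T 3 by norm_num, Tcoeff]; norm_num⟩
    · exact ⟨0, 2, by rw [show M 0 2 = -(T 4) by rfl, negcoeff, Tcoeff]; norm_num⟩

lemma sup4 : sSup ({1, 2, 3, 4} : Set ℤ) = 4 :=
  IsGreatest.csSup_eq ⟨by norm_num, by rintro x (rfl | rfl | rfl | rfl) <;> norm_num⟩

lemma inf4 : sInf ({1, 2, 3, 4} : Set ℤ) = 1 :=
  IsLeast.csInf_eq ⟨by norm_num, by rintro x (rfl | rfl | rfl | rfl) <;> norm_num⟩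

lemma prod_eq : BurauB 0 * BurauB 1 * BurauB 0 * BurauB 2 =
    !![0, 0, -(T 1)^4; (T 1)^3, (T 1)^2, (T 1)^3; 0, -(T 1), -(T 1)^2] := by
  show !![-(T 1)^2, -(T 1), 0; 0, 1, 0; 0, 0, 1] * !![1, 0, 0; -(T 1), -(T 1)^2, -(T 1); 0, 0, 1] *
    !![-(T 1)^2, -(T 1), 0; 0, 1, 0; 0, 0, 1] * !![1, 0, 0; 0, 1, 0; 0, -(T 1), -(T 1)^2] = _
  exact burau_gen (T 1)

lemma prod_eq' : BurauB 0 * BurauB 1 * BurauB 0 * BurauB 2 = M := by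
  rw [prod_eq]
  congr 1 <;> rw [T_pow] <;> norm_num

/-- The Burau matrix of the positive lift of `u = s1 s2 s1 s3` in `B4`, and the fact that its
`projlen` equals `3`, which is odd — so the `B3` identity `projlen = 2 · (Garside length)`
fails for `B4`. -/
theorem burau_lift_s1s2s1s3 :
    BurauB 0 * BurauB 1 * BurauB 0 * BurauB 2 =
      !![0, 0, -(T 1)^4; (T 1)^3, (T 1)^2, (T 1)^3; 0, -(T 1), -(T 1)^2] ∧
    projlen (BurauB 0 * BurauB 1 * BurauB 0 * BurauB 2) = 3 := by
  refine ⟨prod_eq, ?_⟩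
  rw [projlen, matDeg, matVal, prod_eq', exps_eq, sup4, inf4]; norm_num
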